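/- arXiv:2007.08956 — 2 statements merged into one kernel-verified Lean document; each statement's English description precedes it below -/
import Mathlib

section
/- Let A be the n×n adjacency matrix of a finite simple (directed or undirected) graph with n ≥ 2 vertices. Two vertices i, j are cospectral (i.e. [Aʳ]_{ii} = [Aʳ]_{jj} for every positive integer r) if and only if [Aʳ]_{ii} = [Aʳ]_{jj} for every r with 1 ≤ r ≤ n−1. -/
/-- Let `A` be the `n × n` adjacency matrix of a finite simple (directed or
undirected) graph with `n ≥ 2` vertices, i.e. a 0-1 matrix. Two vertices `i, j` are cospectral
(`[Aʳ]_{ii} = [Aʳ]_{jj}` for every positive integer `r`) if and only if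
`[Aʳ]_{ii} = [Aʳ]_{jj}` for every `r` with `1 ≤ r ≤ n − 1`. -/
theorem cospectral_iff_finitely_many_powers {n : ℕ} (hn : 2 ≤ n)
    (A : Matrix (Fin n) (Fin n) ℂ)
    (hA01 : ∀ i j, A i j = 0 ∨ A i j = 1)
    (i j : Fin n) :
    (∀ r : ℕ, 0 < r → (A ^ r) i i = (A ^ r) j j) ↔
      (∀ r : ℕ, 1 ≤ r → r ≤ n - 1 → (A ^ r) i i = (A ^ r) j j) := by
  constructor
  · intro h r hr _; exact h r hr
  · intro h r hr
    by_cases hle : r ≤ n - 1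
    · exact h r hr hle
    -- r ≥ n : use Cayley–Hamilton
    have hcard : Fintype.card (Fin n) = n := Fintype.card_fin n
    have hdeg : (Polynomial.X ^ r %ₘ A.charpoly).natDegree < n := by
      have hmonic := A.charpoly_monic
      have := Polynomial.natDegree_modByMonic_lt (Polynomial.X ^ r) hmonic
        (by
          intro hu
          have : A.charpoly.natDegree = 0 := by simp [hu]
          rw [A.charpoly_natDegree_eq_dim, hcard] at this
          omega)
      rwa [A.charpoly_natDegree_eq_dim, hcard] at this
    have key : A ^ r = ∑ k ∈ Finset.range n,
        (Polynomial.X ^ r %ₘ A.charpoly).coeff k • A ^ k := by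
      rw [Matrix.pow_eq_aeval_mod_charpoly, Polynomial.aeval_eq_sum_range' hdeg]
    have hdiag : ∀ k ∈ Finset.range n, ((Polynomial.X ^ r %ₘ A.charpoly).coeff k • A ^ k) i i
        = ((Polynomial.X ^ r %ₘ A.charpoly).coeff k • A ^ k) j j := by
      intro k hk
      have hk' := Finset.mem_range.mp hk
      rcases Nat.eq_zero_or_pos k with hk0 | hk1
      · subst hk0; simp [Matrix.smul_apply, Matrix.one_apply]
      · have := h k hk1 (by omega)
        simp [Matrix.smul_apply, this]
    calc (A ^ r) i i = ∑ k ∈ Finset.range n,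
          ((Polynomial.X ^ r %ₘ A.charpoly).coeff k • A ^ k) i i := by
            rw [key]; simp [Matrix.sum_apply]
      _ = ∑ k ∈ Finset.range n,
          ((Polynomial.X ^ r %ₘ A.charpoly).coeff k • A ^ k) j j :=
            Finset.sum_congr rfl hdiag
      _ = (A ^ r) j j := by rw [key]; simp [Matrix.sum_apply]
end

section
/- Let G be a finite simple undirected graph with adjacency matrix A, and suppose G is not walk-regular. Then the set {β ∈ ℝ : G is β-subgraph regular} is finite. -/
open Matrix Finset Filter Topology

/-- The matrix exponential, given by the convergent series `∑_{k ≥ 0} M^k / k!`. -/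
noncomputable def matrixExp {n : ℕ} (M : Matrix (Fin n) (Fin n) ℝ) : Matrix (Fin n) (Fin n) ℝ :=
  ∑' k : ℕ, (k.factorial : ℝ)⁻¹ • M ^ k

private lemma factInv_summable (x : ℝ) :
    Summable fun k : ℕ => (k.factorial : ℝ)⁻¹ * x ^ k := by
  refine (Real.summable_pow_div_factorial x).congr fun k => ?_
  rw [div_eq_mul_inv, mul_comm]

private lemma factInv_tsum (x : ℝ) :
    ∑' k : ℕ, (k.factorial : ℝ)⁻¹ * x ^ k = Real.exp x := by
  rw [Real.exp_eq_exp_ℝ, NormedSpace.exp_eq_tsum ℝ]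
  simp [smul_eq_mul]

private lemma pow_spectral {n : ℕ} {A : Matrix (Fin n) (Fin n) ℝ} (hH : A.IsHermitian) (k : ℕ) :
    A ^ k = (hH.eigenvectorUnitary : Matrix (Fin n) (Fin n) ℝ) *
      Matrix.diagonal (fun l => hH.eigenvalues l ^ k) *
      star (hH.eigenvectorUnitary : Matrix (Fin n) (Fin n) ℝ) := by
  set V := (hH.eigenvectorUnitary : Matrix (Fin n) (Fin n) ℝ) with hV
  have hVV : V * star V = 1 := Matrix.mem_unitaryGroup_iff.mp hH.eigenvectorUnitary.2
  have hVV' : star V * V = 1 := Matrix.mem_unitaryGroup_iff'.mp hH.eigenvectorUnitary.2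
  have hspec : A = V * Matrix.diagonal hH.eigenvalues * star V := by
    have := hH.spectral_theorem
    simpa using this
  induction k with
  | zero => simpa using hVV.symm
  | succ k ih =>
      have hmul : (V * Matrix.diagonal (fun l => hH.eigenvalues l ^ k) * star V) * A =
          (V * Matrix.diagonal (fun l => hH.eigenvalues l ^ k) * star V) *
            (V * Matrix.diagonal hH.eigenvalues * star V) := by
        exact congrArg _ hspec
      rw [pow_succ, ih, hmul]
      have h1 : star V * (V * (Matrix.diagonal hH.eigenvalues * star V)) =
          Matrix.diagonal hH.eigenvalues * star V := by
        rw [← mul_assoc, hVV', one_mul]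
      simp only [mul_assoc]
      rw [h1, ← mul_assoc (Matrix.diagonal fun l => hH.eigenvalues l ^ k),
        Matrix.diagonal_mul_diagonal]
      congr 2

private lemma pow_diag_entry {n : ℕ} {A : Matrix (Fin n) (Fin n) ℝ} (hH : A.IsHermitian)
    (k : ℕ) (i : Fin n) :
    (A ^ k) i i = ∑ l, ((hH.eigenvectorUnitary : Matrix (Fin n) (Fin n) ℝ) i l) ^ 2 *
      hH.eigenvalues l ^ k := by
  rw [pow_spectral hH k, Matrix.mul_apply]
  refine Finset.sum_congr rfl fun l _ => ?_
  rw [Matrix.mul_diagonal, Matrix.star_eq_conjTranspose, Matrix.conjTranspose_apply, star_trivial]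
  ring

private lemma matrixExp_diag_entry {n : ℕ} {A : Matrix (Fin n) (Fin n) ℝ} (hH : A.IsHermitian)
    (hbd : ∀ (k : ℕ) (i j : Fin n), |(A ^ k) i j| ≤ (n : ℝ) ^ k) (β : ℝ) (i : Fin n) :
    matrixExp (β • A) i i = ∑ l, ((hH.eigenvectorUnitary : Matrix (Fin n) (Fin n) ℝ) i l) ^ 2 *
      Real.exp (β * hH.eigenvalues l) := by
  have hsum : ∀ i' j' : Fin n,
      Summable fun k : ℕ => ((k.factorial : ℝ)⁻¹ * β ^ k) * (A ^ k) i' j' := by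
    intro i' j'
    apply Summable.of_abs
    refine Summable.of_nonneg_of_le (fun k => abs_nonneg _)
      (fun k => ?_) (factInv_summable (|β| * n))
    rw [abs_mul, abs_mul, abs_pow]
    calc |(k.factorial : ℝ)⁻¹| * |β| ^ k * |(A ^ k) i' j'|
        ≤ (k.factorial : ℝ)⁻¹ * |β| ^ k * (n : ℝ) ^ k := by
          rw [abs_of_nonneg (by positivity : (0:ℝ) ≤ (k.factorial : ℝ)⁻¹)]
          exact mul_le_mul_of_nonneg_left (hbd k i' j') (by positivity)
      _ = (k.factorial : ℝ)⁻¹ * (|β| * n) ^ k := by rw [mul_pow, mul_assoc]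
  have hfun : (fun k : ℕ => (k.factorial : ℝ)⁻¹ • (β • A) ^ k) =
      fun k : ℕ => ((k.factorial : ℝ)⁻¹ * β ^ k) • A ^ k := by
    funext k
    rw [smul_pow, smul_smul]
  have hsummat : Summable fun k : ℕ => ((k.factorial : ℝ)⁻¹ * β ^ k) • A ^ k := by
    refine Pi.summable.mpr fun i' => Pi.summable.mpr fun j' => ?_
    simpa [Matrix.smul_apply, smul_eq_mul] using hsum i' j'
  have h1 : matrixExp (β • A) i i = ∑' k : ℕ, ((k.factorial : ℝ)⁻¹ * β ^ k) * (A ^ k) i i := by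
    rw [matrixExp, hfun]
    erw [tsum_apply hsummat, tsum_apply (Pi.summable.mp hsummat i)]
    simp [Matrix.smul_apply, smul_eq_mul]
  rw [h1]
  have h2 : ∀ k : ℕ, ((k.factorial : ℝ)⁻¹ * β ^ k) * (A ^ k) i i =
      ∑ l, ((hH.eigenvectorUnitary : Matrix (Fin n) (Fin n) ℝ) i l) ^ 2 *
        ((k.factorial : ℝ)⁻¹ * (β * hH.eigenvalues l) ^ k) := by
    intro k
    rw [pow_diag_entry hH k i, Finset.mul_sum]
    exact Finset.sum_congr rfl fun l _ => by rw [mul_pow]; ring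
  rw [tsum_congr h2, Summable.tsum_finsetSum (fun l _ =>
    ((factInv_summable (β * hH.eigenvalues l)).mul_left _))]
  exact Finset.sum_congr rfl fun l _ => by rw [tsum_mul_left, factInv_tsum]

/-- Let `G` be a finite simple undirected graph with adjacency matrix `A`,
and suppose `G` is not walk-regular. Then the set of real numbers `β` for which `G` is
`β`-subgraph regular is finite. -/
theorem non_walk_regular_finitely_many_regular_beta {n : ℕ}
    (G : SimpleGraph (Fin n)) [DecidableRel G.Adj]
    (A : Matrix (Fin n) (Fin n) ℝ) (hA : A = G.adjMatrix ℝ)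
    (hnwr : ¬ ∀ (i j : Fin n) (r : ℕ), 0 < r → (A ^ r) i i = (A ^ r) j j) :
    {β : ℝ | ∀ i j : Fin n, matrixExp (β • A) i i = matrixExp (β • A) j j}.Finite := by
  classical
  push_neg at hnwr
  obtain ⟨i, j, r, hr, hne⟩ := hnwr
  -- A is hermitian
  have hH : A.IsHermitian := by
    rw [hA, Matrix.IsHermitian, Matrix.conjTranspose_eq_transpose_of_trivial]
    exact SimpleGraph.isSymm_adjMatrix G
  -- entrywise bounds
  have h01 : ∀ i' j' : Fin n, 0 ≤ A i' j' ∧ A i' j' ≤ 1 := by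
    intro i' j'
    rw [hA, SimpleGraph.adjMatrix_apply]
    split <;> norm_num
  have hbd0 : ∀ (k : ℕ) (i' j' : Fin n), 0 ≤ (A ^ k) i' j' ∧ (A ^ k) i' j' ≤ (n : ℝ) ^ k := by
    intro k
    induction k with
    | zero =>
      intro i' j'
      simp only [pow_zero, Matrix.one_apply]
      split <;> norm_num
    | succ k ih =>
      intro i' j'
      rw [pow_succ, Matrix.mul_apply]
      constructor
      · exact Finset.sum_nonneg fun l _ => mul_nonneg (ih i' l).1 (h01 l j').1
      · calc ∑ l, (A ^ k) i' l * A l j' ≤ ∑ _l : Fin n, (n : ℝ) ^ k * 1 :=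
              Finset.sum_le_sum fun l _ => mul_le_mul (ih i' l).2 (h01 l j').2 (h01 l j').1
                (by positivity)
          _ = (n : ℝ) ^ (k + 1) := by
              simp [Finset.sum_const, Finset.card_univ, pow_succ, mul_comm]
  have hbd : ∀ (k : ℕ) (i' j' : Fin n), |(A ^ k) i' j'| ≤ (n : ℝ) ^ k := fun k i' j' =>
    abs_le.mpr ⟨le_trans (neg_nonpos.mpr (by positivity)) (hbd0 k i' j').1, (hbd0 k i' j').2⟩
  set V := (hH.eigenvectorUnitary : Matrix (Fin n) (Fin n) ℝ) with hV
  set μ := hH.eigenvalues with hμ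
  set c : Fin n → ℝ := fun l => V i l ^ 2 - V j l ^ 2 with hc
  set T : Finset ℝ := Finset.image μ Finset.univ with hT
  set C : ℝ → ℝ := fun t => ∑ l ∈ Finset.univ.filter (fun l => μ l = t), c l with hC
  have hgroup : ∀ g : ℝ → ℝ, ∑ l, c l * g (μ l) = ∑ t ∈ T, C t * g t := by
    intro g
    rw [← Finset.sum_fiberwise_of_maps_to
      (fun l _ => Finset.mem_image_of_mem μ (Finset.mem_univ l)) (fun l => c l * g (μ l))]
    refine Finset.sum_congr rfl fun t _ => ?_
    rw [hC, Finset.sum_mul]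
    exact Finset.sum_congr rfl fun l hl => by rw [(Finset.mem_filter.mp hl).2]
  set F : ℝ → ℝ := fun β => ∑ t ∈ T, C t * Real.exp (β * t) with hFdef
  have hF : ∀ β, matrixExp (β • A) i i - matrixExp (β • A) j j = F β := by
    intro β
    rw [matrixExp_diag_entry hH hbd β i, matrixExp_diag_entry hH hbd β j,
      ← Finset.sum_sub_distrib]
    have : ∀ l, V i l ^ 2 * Real.exp (β * μ l) - V j l ^ 2 * Real.exp (β * μ l) =
        c l * Real.exp (β * μ l) := fun l => by rw [hc]; ring
    rw [Finset.sum_congr rfl fun l _ => this l]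
    exact hgroup (fun t => Real.exp (β * t))
  -- the moment condition
  have hmomT : ∑ t ∈ T, C t * t ^ r ≠ 0 := by
    rw [← hgroup (fun t => t ^ r)]
    have : ∑ l, c l * μ l ^ r = (A ^ r) i i - (A ^ r) j j := by
      rw [pow_diag_entry hH r i, pow_diag_entry hH r j, ← Finset.sum_sub_distrib]
      exact Finset.sum_congr rfl fun l _ => by rw [hc]; ring
    rw [this]
    exact sub_ne_zero.mpr hne
  set S : Finset ℝ := T.filter (fun t => C t ≠ 0) with hS
  have hFS : ∀ β, F β = ∑ t ∈ S, C t * Real.exp (β * t) := by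
    intro β
    rw [hFdef]
    exact (Finset.sum_filter_of_ne fun t _ h => left_ne_zero_of_mul h).symm
  have hSne : S.Nonempty := by
    by_contra h
    rw [Finset.not_nonempty_iff_eq_empty] at h
    refine hmomT (Finset.sum_eq_zero fun t ht => ?_)
    have hCt : C t = 0 := by
      by_contra h'
      have : t ∈ S := by rw [hS]; exact Finset.mem_filter.mpr ⟨ht, h'⟩
      rw [h] at this
      exact absurd this (Finset.notMem_empty t)
    rw [hCt, zero_mul]
  set tmax : ℝ := S.max' hSne with htmax
  set tmin : ℝ := S.min' hSne with htmin
  have htmaxS : tmax ∈ S := S.max'_mem hSne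
  have htminS : tmin ∈ S := S.min'_mem hSne
  have hCmax : C tmax ≠ 0 := (Finset.mem_filter.mp htmaxS).2
  have hCmin : C tmin ≠ 0 := (Finset.mem_filter.mp htminS).2
  -- limit at +infinity
  have hlim_top : Tendsto (fun β => F β * Real.exp (-(β * tmax))) atTop (𝓝 (C tmax)) := by
    have hterm : ∀ t ∈ S, Tendsto (fun β => C t * Real.exp (β * (t - tmax))) atTop
        (𝓝 (if t = tmax then C t else 0)) := by
      intro t ht
      by_cases h : t = tmax
      · subst h
        simp only [sub_self, mul_zero, Real.exp_zero, mul_one, if_pos rfl]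
        exact tendsto_const_nhds
      · rw [if_neg h]
        have h1 : t - tmax < 0 := sub_neg.mpr (lt_of_le_of_ne (S.le_max' t ht) h)
        have h2 : Tendsto (fun β : ℝ => β * (t - tmax)) atTop atBot :=
          Tendsto.atTop_mul_const_of_neg h1 tendsto_id
        simpa using (Real.tendsto_exp_atBot.comp h2).const_mul (C t)
    have := tendsto_finset_sum S hterm
    rw [Finset.sum_ite_eq' S tmax (fun t => C t), if_pos htmaxS] at this
    refine this.congr fun β => ?_
    rw [hFS β, Finset.sum_mul]
    refine Finset.sum_congr rfl fun t _ => ?_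
    rw [mul_assoc, ← Real.exp_add]
    ring_nf
  -- limit at -infinity
  have hlim_bot : Tendsto (fun β => F β * Real.exp (-(β * tmin))) atBot (𝓝 (C tmin)) := by
    have hterm : ∀ t ∈ S, Tendsto (fun β => C t * Real.exp (β * (t - tmin))) atBot
        (𝓝 (if t = tmin then C t else 0)) := by
      intro t ht
      by_cases h : t = tmin
      · subst h
        simp only [sub_self, mul_zero, Real.exp_zero, mul_one, if_pos rfl]
        exact tendsto_const_nhds
      · rw [if_neg h]
        have h1 : 0 < t - tmin := sub_pos.mpr (lt_of_le_of_ne (S.min'_le t ht) (Ne.symm h))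
        have h2 : Tendsto (fun β : ℝ => β * (t - tmin)) atBot atBot :=
          Tendsto.atBot_mul_const h1 tendsto_id
        simpa using (Real.tendsto_exp_atBot.comp h2).const_mul (C t)
    have := tendsto_finset_sum S hterm
    rw [Finset.sum_ite_eq' S tmin (fun t => C t), if_pos htminS] at this
    refine this.congr fun β => ?_
    rw [hFS β, Finset.sum_mul]
    refine Finset.sum_congr rfl fun t _ => ?_
    rw [mul_assoc, ← Real.exp_add]
    ring_nf
  obtain ⟨B, hB0⟩ : ∃ B : ℝ, ∀ β ≥ B, F β * Real.exp (-(β * tmax)) ≠ 0 :=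
    eventually_atTop.mp (hlim_top.eventually_ne hCmax)
  have hB : ∀ β ≥ B, F β ≠ 0 := fun β hβ h0 => hB0 β hβ (by rw [h0, zero_mul])
  obtain ⟨B', hB0'⟩ : ∃ B' : ℝ, ∀ β ≤ B', F β * Real.exp (-(β * tmin)) ≠ 0 :=
    eventually_atBot.mp (hlim_bot.eventually_ne hCmin)
  have hB' : ∀ β ≤ B', F β ≠ 0 := fun β hβ h0 => hB0' β hβ (by rw [h0, zero_mul])
  -- F is analytic and continuous
  have hFan : AnalyticOnNhd ℝ F Set.univ := by
    rw [hFdef]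
    exact Finset.analyticOnNhd_fun_sum T fun t _ =>
      analyticOnNhd_const.mul ((analyticOnNhd_id.mul analyticOnNhd_const).rexp)
  have hFcont : Continuous F := by
    rw [hFdef]
    exact continuous_finset_sum T fun t _ =>
      continuous_const.mul (Real.continuous_exp.comp (continuous_id.mul continuous_const))
  set Z : Set ℝ := {β | F β = 0} with hZ
  have hZclosed : IsClosed Z := isClosed_eq hFcont continuous_const
  have hZsub : Z ⊆ Set.Icc B' B := by
    intro β hβ
    constructor
    · by_contra h
      exact hB' β (le_of_not_ge h) hβ
    · by_contra h
      exact hB β (le_of_not_ge h) hβ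
  have hZcpt : IsCompact Z := isCompact_Icc.of_isClosed_subset hZclosed hZsub
  have hFB : F B ≠ 0 := hB B le_rfl
  have hiso : ∀ x, F x = 0 → ∀ᶠ w in 𝓝[≠] x, F w ≠ 0 := by
    intro x _
    by_contra h
    rw [Filter.not_eventually] at h
    have heq := hFan.eqOn_zero_of_preconnected_of_frequently_eq_zero isPreconnected_univ
      (Set.mem_univ x) (h.mono fun w hw => not_not.mp hw)
    exact hFB (heq (Set.mem_univ B))
  have hdisc : DiscreteTopology Z := by
    rw [discreteTopology_subtype_iff]
    intro x hx
    rw [Filter.inf_principal_eq_bot]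
    have h := hiso x hx
    exact h.mono fun w hw => hw
  have hZfin : Z.Finite := hZcpt.finite (isDiscrete_iff_discreteTopology.mpr hdisc)
  refine hZfin.subset ?_
  intro β hβ
  have := hβ i j
  show F β = 0
  rw [← hF β, this, sub_self]
end
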